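/- Let p be prime, a, b, m, n, s ∈ {1,...,p-1} with a ≠ b, and M = m+n+s-(p-1) with 0 ≤ M < p-1. Then ∑_{j=0}^{M} C(m, M-j) C(n, j) a^(M-j) b^j ≡ ∑_{k=0}^{s} C(m, M-k) C(s, k) (a-b)^(M-k) (-b)^k mod p. -/

import Mathlib

open Finset

/-- Sum of `x ^ e` over a finite field, for positive exponent `e`. -/
lemma sum_pow_eq_ite (K : Type*) [Field K] [Fintype K] [DecidableEq K] (e : ℕ) (he : 0 < e) :
    ∑ x : K, x ^ e = if Fintype.card K - 1 ∣ e then (-1 : K) else 0 := by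
  classical
  let φ : Kˣ ↪ K := ⟨Units.val, Units.val_injective⟩
  have hmap : univ.map φ = univ \ {0} := by
    ext x
    simpa only [mem_map, mem_univ, Function.Embedding.coeFn_mk, true_and, mem_sdiff,
      mem_singleton, φ] using (show (∃ a : Kˣ, (a : K) = x) ↔ x ≠ 0 from
        ⟨fun ⟨u, hu⟩ => hu ▸ u.ne_zero, fun h => ⟨Units.mk0 x h, rfl⟩⟩)
  calc
    ∑ x : K, x ^ e = ∑ x ∈ univ \ {(0 : K)}, x ^ e := by
      rw [← sum_sdiff ({0} : Finset K).subset_univ, sum_singleton, zero_pow he.ne', add_zero]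
    _ = ∑ x : Kˣ, (x ^ e : K) := by simp [φ, ← hmap, univ.sum_map φ]
    _ = _ := FiniteField.sum_pow_units K e

/-- Coefficient extraction: the sum over the field of
`(1+x t)^m (1+y t)^n t^(p-1-M)` picks out (minus) the coefficient of `t^M`. -/
lemma coeff_extract (p : ℕ) [Fact p.Prime] (x y : ZMod p) (m n M : ℕ)
    (h1 : M < p - 1) (h2 : m + n < M + (p - 1)) :
    ∑ t : ZMod p, (1 + x * t) ^ m * (1 + y * t) ^ n * t ^ (p - 1 - M)
      = - ∑ j ∈ range (M + 1),
          (m.choose (M - j) : ZMod p) * (n.choose j : ZMod p) * x ^ (M - j) * y ^ j := by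
  classical
  have hp2 : 2 ≤ p := (Fact.out : p.Prime).two_le
  have expand : ∀ t : ZMod p,
      (1 + x * t) ^ m * (1 + y * t) ^ n * t ^ (p - 1 - M)
        = ∑ i ∈ range (m + 1), ∑ j ∈ range (n + 1),
            ((m.choose i : ZMod p) * (n.choose j : ZMod p) * x ^ i * y ^ j)
              * t ^ (i + j + (p - 1 - M)) := by
    intro t
    rw [add_comm (1 : ZMod p) (x * t), add_comm (1 : ZMod p) (y * t), add_pow, add_pow,
      sum_mul_sum, sum_mul]
    refine sum_congr rfl fun i _ => ?_
    rw [sum_mul]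
    refine sum_congr rfl fun j _ => ?_
    simp only [one_pow, mul_pow, pow_add]
    ring
  have key : ∑ t : ZMod p, (1 + x * t) ^ m * (1 + y * t) ^ n * t ^ (p - 1 - M)
      = ∑ i ∈ range (m + 1), ∑ j ∈ range (n + 1),
          (if i + j = M then
            -((m.choose i : ZMod p) * (n.choose j : ZMod p) * x ^ i * y ^ j) else 0) := by
    calc
      ∑ t : ZMod p, (1 + x * t) ^ m * (1 + y * t) ^ n * t ^ (p - 1 - M)
          = ∑ t : ZMod p, ∑ i ∈ range (m + 1), ∑ j ∈ range (n + 1),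
              ((m.choose i : ZMod p) * (n.choose j : ZMod p) * x ^ i * y ^ j)
                * t ^ (i + j + (p - 1 - M)) := sum_congr rfl fun t _ => expand t
      _ = ∑ i ∈ range (m + 1), ∑ j ∈ range (n + 1),
            ((m.choose i : ZMod p) * (n.choose j : ZMod p) * x ^ i * y ^ j)
              * ∑ t : ZMod p, t ^ (i + j + (p - 1 - M)) := by
          rw [Finset.sum_comm]
          refine sum_congr rfl fun i _ => ?_
          rw [Finset.sum_comm]
          refine sum_congr rfl fun j _ => ?_
          rw [← Finset.mul_sum]
      _ = _ := by
          refine sum_congr rfl fun i hi => sum_congr rfl fun j hj => ?_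
          rw [mem_range] at hi hj
          rw [sum_pow_eq_ite (ZMod p) _ (by omega), ZMod.card]
          by_cases hij : i + j = M
          · have hpe : i + j + (p - 1 - M) = p - 1 := by omega
            rw [if_pos hij, hpe, if_pos dvd_rfl, mul_neg_one]
          · rw [if_neg hij, if_neg, mul_zero]
            intro hdvd
            have hle : p - 1 ≤ i + j + (p - 1 - M) := Nat.le_of_dvd (by omega) hdvd
            have h2' : (p - 1) ∣ (i + j + (p - 1 - M)) - (p - 1) := Nat.dvd_sub hdvd dvd_rfl
            have h3' : i + j + (p - 1 - M) - (p - 1) = 0 :=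
              Nat.eq_zero_of_dvd_of_lt h2' (by omega)
            omega
  rw [key]
  -- now collapse the double sum with the `ite`
  set N := m + n + M + 1 with hN
  have g0 : ∀ i j : ℕ, m < i ∨ n < j →
      (if i + j = M then
        -((m.choose i : ZMod p) * (n.choose j : ZMod p) * x ^ i * y ^ j) else 0) = 0 := by
    intro i j hij
    rcases hij with h | h
    · by_cases hM' : i + j = M
      · rw [if_pos hM', Nat.choose_eq_zero_of_lt h]; push_cast; ring
      · rw [if_neg hM']
    · by_cases hM' : i + j = M
      · rw [if_pos hM', Nat.choose_eq_zero_of_lt h]; push_cast; ring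
      · rw [if_neg hM']
  have step1 : (∑ i ∈ range (m + 1), ∑ j ∈ range (n + 1),
      (if i + j = M then
        -((m.choose i : ZMod p) * (n.choose j : ZMod p) * x ^ i * y ^ j) else 0))
      = ∑ i ∈ range N, ∑ j ∈ range N,
      (if i + j = M then
        -((m.choose i : ZMod p) * (n.choose j : ZMod p) * x ^ i * y ^ j) else 0) := by
    calc (∑ i ∈ range (m + 1), ∑ j ∈ range (n + 1),
        (if i + j = M then
          -((m.choose i : ZMod p) * (n.choose j : ZMod p) * x ^ i * y ^ j) else 0))
        = ∑ i ∈ range (m + 1), ∑ j ∈ range N,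
        (if i + j = M then
          -((m.choose i : ZMod p) * (n.choose j : ZMod p) * x ^ i * y ^ j) else 0) :=
        sum_congr rfl fun i _ => sum_subset (range_subset_range.2 (show n + 1 ≤ N by omega))
          (fun j _ hj => g0 i j (Or.inr (by simp at hj; omega)))
      _ = ∑ i ∈ range N, ∑ j ∈ range N,
        (if i + j = M then
          -((m.choose i : ZMod p) * (n.choose j : ZMod p) * x ^ i * y ^ j) else 0) :=
        sum_subset (range_subset_range.2 (show m + 1 ≤ N by omega))
          (fun i _ hi => sum_eq_zero fun j _ => g0 i j (Or.inl (by simp at hi; omega)))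
  rw [step1, Finset.sum_comm]
  have inner : ∀ j ∈ range N, (∑ i ∈ range N,
      (if i + j = M then
        -((m.choose i : ZMod p) * (n.choose j : ZMod p) * x ^ i * y ^ j) else 0))
      = if j ≤ M then
          -((m.choose (M - j) : ZMod p) * (n.choose j : ZMod p) * x ^ (M - j) * y ^ j)
        else 0 := by
    intro j _
    by_cases hjM : j ≤ M
    · rw [if_pos hjM]
      rw [show (∑ i ∈ range N,
          (if i + j = M then
            -((m.choose i : ZMod p) * (n.choose j : ZMod p) * x ^ i * y ^ j) else 0))
          = ∑ i ∈ range N,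
          (if i = M - j then
            -((m.choose i : ZMod p) * (n.choose j : ZMod p) * x ^ i * y ^ j) else 0) from
        sum_congr rfl fun i _ => if_congr (by omega) rfl rfl]
      rw [Finset.sum_ite_eq' (range N) (M - j)]
      rw [if_pos (mem_range.2 (by omega))]
    · rw [if_neg hjM]
      exact sum_eq_zero fun i _ => if_neg (by omega)
  rw [sum_congr rfl inner]
  rw [← sum_subset (range_subset_range.2 (show M + 1 ≤ N by omega))
    (fun j _ hj => if_neg (by simp at hj; omega))]
  rw [← Finset.sum_neg_distrib]
  refine sum_congr rfl fun j hj => ?_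
  rw [mem_range] at hj
  rw [if_pos (by omega)]

/-- The substitution `u = t / (1 + b t)` identity. -/
lemma sum_subst (p : ℕ) [Fact p.Prime] (a b : ZMod p) (hb : b ≠ 0) (m n s E : ℕ)
    (hn : 0 < n) (hs : 0 < s) (hE : m + n + s + E = 2 * (p - 1)) :
    ∑ t : ZMod p, (1 + a * t) ^ m * (1 + b * t) ^ n * t ^ E
      = ∑ u : ZMod p, (1 + (a - b) * u) ^ m * (1 + (-b) * u) ^ s * u ^ E := by
  classical
  refine Finset.sum_nbij'
    (fun t => if 1 + b * t = 0 then b⁻¹ else t * (1 + b * t)⁻¹)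
    (fun u => if 1 + (-b) * u = 0 then -b⁻¹ else u * (1 + (-b) * u)⁻¹)
    (fun _ _ => mem_univ _) (fun _ _ => mem_univ _) ?_ ?_ ?_
  · -- left inverse
    intro t _
    by_cases hc : 1 + b * t = 0
    · rw [if_pos hc]
      have hbb : 1 + (-b) * b⁻¹ = 0 := by
        rw [neg_mul, mul_inv_cancel₀ hb]; ring
      rw [if_pos hbb]
      field_simp
      linear_combination -hc
    · rw [if_neg hc]
      have h1 : 1 + (-b) * (t * (1 + b * t)⁻¹) = (1 + b * t)⁻¹ := by
        field_simp
        ring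
      rw [h1, if_neg (inv_ne_zero hc), inv_inv]
      field_simp
      exact mul_div_cancel_right₀ t (by rwa [mul_comm t b])
  · -- right inverse
    intro u _
    by_cases hd : 1 + (-b) * u = 0
    · rw [if_pos hd]
      have hbb : 1 + b * (-b⁻¹) = 0 := by
        rw [mul_neg, mul_inv_cancel₀ hb]; ring
      rw [if_pos hbb]
      field_simp
      linear_combination hd
    · rw [if_neg hd]
      have h1 : 1 + b * (u * (1 + (-b) * u)⁻¹) = (1 + (-b) * u)⁻¹ := by
        refine eq_inv_of_mul_eq_one_right ?_
        have hc := inv_mul_cancel₀ hd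
        calc (1 + (-b) * u) * (1 + b * (u * (1 + (-b) * u)⁻¹))
            = 1 + (-b) * u + b * u * ((1 + (-b) * u)⁻¹ * (1 + (-b) * u)) := by ring
          _ = 1 := by rw [hc]; ring
      rw [h1, if_neg (inv_ne_zero hd), inv_inv, mul_assoc, inv_mul_cancel₀ hd, mul_one]
  · -- pointwise equality
    intro t _
    by_cases hc : 1 + b * t = 0
    · rw [if_pos hc, hc]
      have hbb : 1 + (-b) * b⁻¹ = 0 := by
        rw [neg_mul, mul_inv_cancel₀ hb]; ring
      rw [hbb, zero_pow hn.ne', zero_pow hs.ne']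
      ring
    · rw [if_neg hc]
      have hc1 : (1 + b * t) ^ (p - 1) = 1 := ZMod.pow_card_sub_one_eq_one hc
      have e1 : 1 + (a - b) * (t * (1 + b * t)⁻¹) = (1 + a * t) * (1 + b * t)⁻¹ := by
        field_simp
        ring
      have e2 : 1 + (-b) * (t * (1 + b * t)⁻¹) = (1 + b * t)⁻¹ := by
        field_simp
        ring
      have hprod : (1 + b * t) ^ (m + s + E) * (1 + b * t) ^ n = 1 := by
        rw [← pow_add, show m + s + E + n = 2 * (p - 1) by omega, mul_comm 2 (p-1),
          pow_mul, hc1, one_pow]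
      have keyp : ((1 + b * t)⁻¹) ^ (m + s + E) = (1 + b * t) ^ n := by
        rw [inv_pow]
        exact inv_eq_of_mul_eq_one_right hprod
      rw [e1, e2, ← keyp]
      rw [mul_pow]
      ring

theorem convolution_general_form (p a b m n s M : ℕ) (hp : p.Prime)
    (ha : 1 ≤ a ∧ a ≤ p - 1) (hb : 1 ≤ b ∧ b ≤ p - 1) (hab : a ≠ b)
    (hm : 1 ≤ m ∧ m ≤ p - 1) (hn : 1 ≤ n ∧ n ≤ p - 1) (hs : 1 ≤ s ∧ s ≤ p - 1)
    (hM : (M : ℤ) = (m : ℤ) + n + s - ((p : ℤ) - 1)) (hM2 : M < p - 1) :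
    (∑ j ∈ Finset.range (M + 1),
        (m.choose (M - j) : ZMod p) * (n.choose j : ZMod p) *
          (a : ZMod p) ^ (M - j) * (b : ZMod p) ^ j) =
      ∑ k ∈ Finset.range (s + 1),
        if k ≤ M then
          (m.choose (M - k) : ZMod p) * (s.choose k : ZMod p) *
            ((a : ZMod p) - (b : ZMod p)) ^ (M - k) * (-(b : ZMod p)) ^ k
        else 0 := by
  haveI : Fact p.Prime := ⟨hp⟩
  have hp2 : 2 ≤ p := hp.two_le
  have hps : m + n + s = M + (p - 1) := by omega
  have hbz : (b : ZMod p) ≠ 0 := by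
    intro h
    rw [ZMod.natCast_eq_zero_iff] at h
    have := Nat.le_of_dvd (by omega) h
    omega
  have A := coeff_extract p (a : ZMod p) (b : ZMod p) m n M hM2 (by omega)
  have B := coeff_extract p ((a : ZMod p) - b) (-(b : ZMod p)) m s M hM2 (by omega)
  have C := sum_subst p (a : ZMod p) (b : ZMod p) hbz m n s (p - 1 - M)
    (by omega) (by omega) (by omega)
  have main : (∑ j ∈ Finset.range (M + 1),
        (m.choose (M - j) : ZMod p) * (n.choose j : ZMod p) *
          (a : ZMod p) ^ (M - j) * (b : ZMod p) ^ j)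
      = ∑ k ∈ range (M + 1),
          (m.choose (M - k) : ZMod p) * (s.choose k : ZMod p) *
            ((a : ZMod p) - (b : ZMod p)) ^ (M - k) * (-(b : ZMod p)) ^ k := by
    have := A.symm.trans (C.trans B)
    exact neg_injective this
  rw [main]
  -- convert range (M+1) to range (s+1) with the ite
  set N := s + M + 1 with hN
  have term0 : ∀ k, s < k →
      (if k ≤ M then
        (m.choose (M - k) : ZMod p) * (s.choose k : ZMod p) *
          ((a : ZMod p) - (b : ZMod p)) ^ (M - k) * (-(b : ZMod p)) ^ k
      else 0) = 0 := by
    intro k hk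
    by_cases hkM : k ≤ M
    · rw [if_pos hkM, Nat.choose_eq_zero_of_lt hk]; push_cast; ring
    · rw [if_neg hkM]
  calc
    (∑ k ∈ range (M + 1),
        (m.choose (M - k) : ZMod p) * (s.choose k : ZMod p) *
          ((a : ZMod p) - (b : ZMod p)) ^ (M - k) * (-(b : ZMod p)) ^ k)
      = ∑ k ∈ range (M + 1),
          (if k ≤ M then
            (m.choose (M - k) : ZMod p) * (s.choose k : ZMod p) *
              ((a : ZMod p) - (b : ZMod p)) ^ (M - k) * (-(b : ZMod p)) ^ k
          else 0) := by
        refine sum_congr rfl fun k hk => ?_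
        rw [mem_range] at hk
        rw [if_pos (by omega)]
    _ = ∑ k ∈ range N,
          (if k ≤ M then
            (m.choose (M - k) : ZMod p) * (s.choose k : ZMod p) *
              ((a : ZMod p) - (b : ZMod p)) ^ (M - k) * (-(b : ZMod p)) ^ k
          else 0) := by
        refine sum_subset (range_subset_range.2 (by omega)) fun k _ hk => ?_
        rw [mem_range] at hk
        exact if_neg (by omega)
    _ = ∑ k ∈ range (s + 1),
          (if k ≤ M then
            (m.choose (M - k) : ZMod p) * (s.choose k : ZMod p) *
              ((a : ZMod p) - (b : ZMod p)) ^ (M - k) * (-(b : ZMod p)) ^ k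
          else 0) := by
        refine (sum_subset (range_subset_range.2 (by omega)) fun k _ hk => ?_).symm
        rw [mem_range] at hk
        exact term0 k (by omega)
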